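/- Let G be a finite connected ℝ>0-edge-labelled graph and let d̄(x,y) denote the minimum length of a path connecting distinct vertices x and y in G. Then the label of every edge {x,y} of G equals d̄(x,y) (i.e., G is a subgraph of its shortest path completion) if and only if G contains no induced non-metric cycle. -/

import Mathlib

/-- An `ℝ>0`-edge-labelled graph: an irreflexive symmetric adjacency relation on the
vertex set together with a symmetric assignment of a positive real label to each edge. -/
structure ELGraph (V : Type*) where
  Adj : V → V → Prop
  label : V → V → ℝ
  adj_symm : ∀ x y, Adj x y → Adj y x
  adj_irrefl : ∀ x, ¬ Adj x x
  label_symm : ∀ x y, label x y = label y x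
  label_pos : ∀ x y, Adj x y → 0 < label x y


/-- The cyclic successor of an index in `Fin n`. -/
def Fin.cycSucc {n : ℕ} (i : Fin n) : Fin n := ⟨(i.1 + 1) % n, Nat.mod_lt _ i.pos⟩

namespace ELGraph

variable {V : Type*}

/-- A walk: a nonempty list of vertices with consecutive vertices joined by edges. -/
def IsWalk (G : ELGraph V) (l : List V) : Prop :=
  l ≠ [] ∧ l.Chain' G.Adj

/-- The length of a walk: the sum of the labels of its (consecutive) edges. -/
def walkLen (G : ELGraph V) (l : List V) : ℝ :=
  ((l.zip l.tail).map fun p => G.label p.1 p.2).sum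

/-- A walk connecting `x` and `y`. -/
def IsWalkBetween (G : ELGraph V) (x y : V) (l : List V) : Prop :=
  G.IsWalk l ∧ l.head? = some x ∧ l.getLast? = some y

/-- A path connecting `x` and `y`: a walk with no repeated vertices. -/
def IsPathBetween (G : ELGraph V) (x y : V) (l : List V) : Prop :=
  G.IsWalkBetween x y l ∧ l.Nodup

/-- `G` is connected: any two vertices are joined by a path. -/
def Connected (G : ELGraph V) : Prop :=
  ∀ x y, ∃ l, G.IsPathBetween x y l

/-- `d` is the shortest-path distance of `G`: `d x x = 0`, and for distinct `x, y`,
`d x y` is the minimum length of a path connecting `x` and `y`. -/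
def IsShortestDist (G : ELGraph V) (d : V → V → ℝ) : Prop :=
  (∀ x, d x x = 0) ∧
  ∀ x y, x ≠ y →
    (∃ l, G.IsPathBetween x y l ∧ G.walkLen l = d x y) ∧
    ∀ l, G.IsPathBetween x y l → d x y ≤ G.walkLen l

/-- A cycle on `n ≥ 3` vertices, given as an injective map `Fin n → V` with consecutive
vertices (cyclically, including the wrap-around pair) joined by edges. -/
def IsCycle (G : ELGraph V) {n : ℕ} (c : Fin n → V) : Prop :=
  3 ≤ n ∧ Function.Injective c ∧ ∀ i, G.Adj (c i) (c i.cycSucc)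

/-- The total length of the `n` edges of a cycle. -/
noncomputable def cycleLen (G : ELGraph V) {n : ℕ} (c : Fin n → V) : ℝ :=
  ∑ i, G.label (c i) (c i.cycSucc)

/-- The edge of the cycle at position `i₀` is a long edge: its label is strictly greater
than the sum of the labels of all the remaining edges of the cycle. -/
def IsLongEdge (G : ELGraph V) {n : ℕ} (c : Fin n → V) (i₀ : Fin n) : Prop :=
  G.cycleLen c - G.label (c i₀) (c i₀.cycSucc) < G.label (c i₀) (c i₀.cycSucc)

/-- A non-metric cycle: a cycle having a long edge. -/
def IsNonMetricCycle (G : ELGraph V) {n : ℕ} (c : Fin n → V) : Prop :=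
  G.IsCycle c ∧ ∃ i₀, G.IsLongEdge c i₀

/-- An induced cycle: the only edges of `G` among its vertices are the cycle edges. -/
def IsInducedCycle (G : ELGraph V) {n : ℕ} (c : Fin n → V) : Prop :=
  G.IsCycle c ∧ ∀ i j, G.Adj (c i) (c j) → j = i.cycSucc ∨ i = j.cycSucc

/-- An embedding of `A` into `B` as an induced subgraph: an injective map on vertices
such that two vertices are joined by an edge of label `ℓ` iff their images are. -/
def IsEmbedding {W : Type*} (A : ELGraph V) (B : ELGraph W) (e : V → W) : Prop :=
  Function.Injective e ∧
  ∀ x y, (A.Adj x y ↔ B.Adj (e x) (e y)) ∧ (A.Adj x y → B.label (e x) (e y) = A.label x y)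

/-- An automorphism of `B`: a permutation of the vertices preserving edges, non-edges
and labels. -/
def IsAuto {W : Type*} (B : ELGraph W) (Φ : Equiv.Perm W) : Prop :=
  ∀ x y, (B.Adj x y ↔ B.Adj (Φ x) (Φ y)) ∧ (B.Adj x y → B.label (Φ x) (Φ y) = B.label x y)

/-- A partial automorphism of `A` with domain `S`: an injective map preserving edges,
non-edges and labels. -/
def IsPartialAuto (A : ELGraph V) (S : Set V) (φ : S → V) : Prop :=
  Function.Injective φ ∧
  ∀ x y : S, (A.Adj x y ↔ A.Adj (φ x) (φ y)) ∧ (A.Adj x y → A.label (φ x) (φ y) = A.label x y)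

lemma walkLen_singleton (G : ELGraph V) (x : V) : G.walkLen [x] = 0 := by
  simp [walkLen]

lemma walkLen_cons_cons (G : ELGraph V) (x y : V) (l : List V) :
    G.walkLen (x::y::l) = G.label x y + G.walkLen (y::l) := by
  simp [walkLen]

lemma walkLen_pair (G : ELGraph V) (x y : V) : G.walkLen [x, y] = G.label x y := by
  rw [walkLen_cons_cons, walkLen_singleton, add_zero]

lemma walkLen_ofFn (G : ELGraph V) {n : ℕ} (f : Fin (n+1) → V) :
    G.walkLen (List.ofFn f) = ∑ i : Fin n, G.label (f i.castSucc) (f i.succ) := by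
  induction n with
  | zero => simp [List.ofFn_succ, walkLen_singleton]
  | succ m ih =>
    rw [List.ofFn_succ, show (List.ofFn fun i : Fin (m+1) => f i.succ) =
        f 1 :: List.ofFn (fun i : Fin m => f i.succ.succ) from by
          rw [List.ofFn_succ]; rfl,
      walkLen_cons_cons]
    have := ih (fun i => f i.succ)
    rw [List.ofFn_succ] at this
    rw [show (f 1 : V) = f (0 : Fin (m+1)).succ from rfl] at *
    rw [this, Fin.sum_univ_succ]
    simp [Fin.succ_castSucc, -Fin.castSucc_succ]

lemma cycSucc_castSucc {n : ℕ} (i : Fin n) :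
    (i.castSucc : Fin (n+1)).cycSucc = i.succ := by
  have h := i.isLt
  simp only [Fin.cycSucc, Fin.ext_iff, Fin.coe_castSucc, Fin.val_succ]
  rw [Nat.mod_eq_of_lt (by omega)]

lemma cycSucc_last (n : ℕ) : (Fin.last n).cycSucc = 0 := by
  simp [Fin.cycSucc, Fin.ext_iff]

lemma cycleLen_eq_walkLen (G : ELGraph V) {n : ℕ} (c : Fin (n+1) → V) :
    G.cycleLen c = G.walkLen (List.ofFn c)
      + G.label (c (Fin.last n)) (c 0) := by
  rw [cycleLen, Fin.sum_univ_castSucc, walkLen_ofFn, cycSucc_last]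
  congr 1
  apply Finset.sum_congr rfl
  intro i _
  rw [cycSucc_castSucc]

lemma cycleLen_eq_walkLen' (G : ELGraph V) {n : ℕ} (hn : 0 < n) (c : Fin n → V) :
    G.cycleLen c = G.walkLen (List.ofFn c)
      + G.label (c ⟨n - 1, by omega⟩) (c ⟨0, hn⟩) := by
  cases n with
  | zero => omega
  | succ p =>
    have := cycleLen_eq_walkLen G c
    convert this using 3 <;> simp [Fin.last, Fin.ext_iff]

def rot {n : ℕ} (r k : Fin n) : Fin n := ⟨(r.1 + k.1) % n, Nat.mod_lt _ k.pos⟩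

lemma rot_cycSucc {n : ℕ} (r k : Fin n) : rot r k.cycSucc = (rot r k).cycSucc := by
  simp only [rot, Fin.cycSucc, Fin.ext_iff]
  rw [Nat.add_mod_mod, Nat.mod_add_mod, Nat.add_assoc]

lemma rot_bijective {n : ℕ} (r : Fin n) : Function.Bijective (rot r) := by
  rw [Fintype.bijective_iff_injective_and_card]
  refine ⟨fun a b hab => ?_, rfl⟩
  simp only [rot, Fin.ext_iff] at hab ⊢
  have ha := a.isLt
  have hb := b.isLt
  have : (r.1 + a.1) % n = (r.1 + b.1) % n := hab
  have h2 : a.1 % n = b.1 % n := Nat.ModEq.add_left_cancel' r.1 this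
  rwa [Nat.mod_eq_of_lt ha, Nat.mod_eq_of_lt hb] at h2

lemma isCycle_rot {n : ℕ} {G : ELGraph V} {c : Fin n → V} (hc : G.IsCycle c) (r : Fin n) :
    G.IsCycle (c ∘ rot r) := by
  refine ⟨hc.1, hc.2.1.comp (rot_bijective r).1, fun k => ?_⟩
  simp only [Function.comp_apply]
  rw [rot_cycSucc]
  exact hc.2.2 _

lemma cycleLen_rot {n : ℕ} (G : ELGraph V) (c : Fin n → V) (r : Fin n) :
    G.cycleLen (c ∘ rot r) = G.cycleLen c := by
  exact Fintype.sum_bijective (rot r) (rot_bijective r) _ _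
    (fun k => by simp only [Function.comp_apply]; rw [← rot_cycSucc])

lemma chain'_ofFn {n : ℕ} {G : ELGraph V} (f : Fin (n+1) → V)
    (hf : ∀ i : Fin n, G.Adj (f i.castSucc) (f i.succ)) :
    (List.ofFn f).Chain' G.Adj := by
  rw [List.Chain', List.isChain_iff_getElem]
  intro i hi
  simp only [List.length_ofFn] at hi
  rw [List.getElem_ofFn, List.getElem_ofFn]
  have hi' : i < n := by omega
  have := hf ⟨i, hi'⟩
  convert this using 2 <;> rfl

lemma isPathBetween_ofFn {n : ℕ} {G : ELGraph V} (f : Fin (n+1) → V)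
    (hinj : Function.Injective f)
    (hf : ∀ i : Fin n, G.Adj (f i.castSucc) (f i.succ)) :
    G.IsPathBetween (f 0) (f (Fin.last n)) (List.ofFn f) := by
  refine ⟨⟨⟨?_, chain'_ofFn f hf⟩, ?_, ?_⟩, List.nodup_ofFn.mpr hinj⟩
  · simp [← List.length_pos_iff]
  · rw [List.ofFn_succ]; rfl
  · rw [List.getLast?_eq_getElem?, List.length_ofFn, List.getElem?_ofFn]
    simp [List.ofFnNthVal, Fin.last]

lemma rot_zero {n : ℕ} (r : Fin n) : rot r ⟨0, r.pos⟩ = r := by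
  simp [rot, Fin.ext_iff, Nat.mod_eq_of_lt r.isLt]

lemma metric_no_nonmetric {G : ELGraph V} {d : V → V → ℝ} (hd : G.IsShortestDist d)
    (h : ∀ x y, G.Adj x y → G.label x y = d x y)
    {n : ℕ} {c : Fin n → V} (hc : G.IsNonMetricCycle c) : False := by
  obtain ⟨⟨hn3, hinj, hadj⟩, i₀, hlong⟩ := hc
  obtain ⟨p, rfl⟩ : ∃ p, n = p + 1 := ⟨n - 1, by omega⟩
  set x := c i₀ with hx
  set y := c i₀.cycSucc with hy
  have hyx : y ≠ x := by
    intro hEq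
    have := hadj i₀
    rw [← hx, ← hy, hEq] at this
    exact G.adj_irrefl x this
  set c' : Fin (p+1) → V := c ∘ rot i₀.cycSucc with hc'
  have hcyc' : G.IsCycle c' := isCycle_rot ⟨hn3, hinj, hadj⟩ _
  have h0 : c' 0 = y := by
    show c (rot i₀.cycSucc ⟨0, _⟩) = y
    rw [rot_zero]
  have hlast : c' (Fin.last p) = x := by
    show c (rot i₀.cycSucc (Fin.last p)) = x
    congr 1
    have hi := i₀.isLt
    simp only [rot, Fin.cycSucc, Fin.last, Fin.ext_iff]
    rw [Nat.mod_add_mod, show i₀.1 + 1 + p = i₀.1 + (p+1) by omega,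
      Nat.add_mod_right, Nat.mod_eq_of_lt hi]
  have hpath : G.IsPathBetween y x (List.ofFn c') := by
    rw [← h0, ← hlast]
    exact isPathBetween_ofFn c' hcyc'.2.1
      (fun i => by rw [← cycSucc_castSucc]; exact hcyc'.2.2 _)
  have hlen : G.cycleLen c = G.walkLen (List.ofFn c') + G.label x y := by
    rw [← cycleLen_rot G c i₀.cycSucc]
    rw [show G.cycleLen (c ∘ rot i₀.cycSucc) = G.cycleLen c' from rfl,
      cycleLen_eq_walkLen, hlast, h0]
  have hd1 : d y x ≤ G.walkLen (List.ofFn c') := (hd.2 y x hyx).2 _ hpath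
  have hd2 : G.label y x = d y x := h y x (G.adj_symm _ _ (hadj i₀))
  have hsym : G.label y x = G.label x y := G.label_symm _ _
  have : G.cycleLen c - G.label x y < G.label x y := hlong
  linarith

lemma nonmetric_of_bad_edge {G : ELGraph V} {d : V → V → ℝ} (hd : G.IsShortestDist d)
    {x y : V} (hxy : G.Adj x y) (hbad : G.label x y ≠ d x y) :
    ∃ (n : ℕ) (c : Fin n → V), G.IsNonMetricCycle c := by
  have hne : x ≠ y := fun h => G.adj_irrefl x (h ▸ hxy)
  have hpair : G.IsPathBetween x y [x, y] := by
    refine ⟨⟨⟨by simp, ?_⟩, rfl, rfl⟩, by simp [hne]⟩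
    exact List.isChain_pair.mpr hxy
  have hle : d x y ≤ G.label x y := by
    have := (hd.2 x y hne).2 _ hpair
    rwa [walkLen_pair] at this
  have hlt : d x y < G.label x y := lt_of_le_of_ne hle (Ne.symm hbad)
  obtain ⟨l, hl, hlen⟩ := (hd.2 x y hne).1
  have hne0 : l ≠ [] := hl.1.1.1
  have hhead : l.head hne0 = x := by
    have := hl.1.2.1
    rw [List.head?_eq_head hne0] at this
    exact Option.some_injective _ this
  have hlast : l.getLast hne0 = y := by
    have := hl.1.2.2
    rw [List.getLast?_eq_getLast hne0] at this
    exact Option.some_injective _ this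
  have h3 : 3 ≤ l.length := by
    rcases l with _ | ⟨a, _ | ⟨b, _ | ⟨e, t⟩⟩⟩
    · exact absurd rfl hne0
    · exact absurd ((by simpa using hhead : a = x).symm.trans
        (by simpa using hlast : a = y)) hne
    · exfalso
      have ha : a = x := by simpa using hhead
      have hb : b = y := by simpa [List.getLast] using hlast
      subst ha; subst hb
      rw [walkLen_pair] at hlen
      linarith
    · simp
  have hn : 0 < l.length := by omega
  refine ⟨l.length, l.get, ⟨h3, List.nodup_iff_injective_get.mp hl.2, ?_⟩,
    ⟨l.length - 1, Nat.sub_lt hn one_pos⟩, ?_⟩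
  · -- adjacency
    intro i
    by_cases hi : i.1 < l.length - 1
    · have hcs : (i.cycSucc : Fin l.length) = ⟨i.1 + 1, by omega⟩ := by
        simp only [Fin.cycSucc, Fin.ext_iff, Fin.val_mk]
        exact Nat.mod_eq_of_lt (by omega)
      rw [hcs]
      have := List.isChain_iff_getElem.mp hl.1.1.2 i.1 (by omega)
      convert this using 2 <;> rfl
    · have hi' : i.1 = l.length - 1 := by have := i.isLt; omega
      have hcs : i.cycSucc = ⟨0, hn⟩ := by
        simp only [Fin.cycSucc, Fin.ext_iff, hi']
        rw [show l.length - 1 + 1 = l.length by omega, Nat.mod_self]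
      have hci : l.get i = y := by
        rw [show i = ⟨l.length - 1, Nat.sub_lt hn one_pos⟩ from Fin.ext hi', ← hlast,
          List.getLast_eq_getElem]; rfl
      rw [hcs, hci, List.get_mk_zero, hhead]
      exact G.adj_symm _ _ hxy
  · -- long edge
    set i₀ : Fin l.length := ⟨l.length - 1, Nat.sub_lt hn one_pos⟩ with hi₀
    have hcs : i₀.cycSucc = ⟨0, hn⟩ := by
      simp only [Fin.cycSucc, Fin.ext_iff, hi₀]
      rw [show l.length - 1 + 1 = l.length by omega, Nat.mod_self]
    have hci : l.get i₀ = y := by rw [← hlast, List.getLast_eq_getElem]; rfl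
    have hc0 : l.get ⟨0, hn⟩ = x := by rw [List.get_mk_zero, hhead]
    have hclen : G.cycleLen l.get = G.walkLen l + G.label y x := by
      obtain ⟨p, hp⟩ : ∃ p, l.length = p + 1 := ⟨l.length - 1, by omega⟩
      have : G.cycleLen l.get = G.walkLen (List.ofFn l.get)
          + G.label (l.get i₀) (l.get ⟨0, hn⟩) := cycleLen_eq_walkLen' G hn l.get
      rw [this, List.ofFn_get, hci, hc0]
    rw [IsLongEdge, hcs, hci, hc0, hclen, G.label_symm y x]
    rw [hlen]
    linarith

lemma isNonMetricCycle_rot {n : ℕ} {G : ELGraph V} {c : Fin n → V}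
    (hc : G.IsNonMetricCycle c) (r : Fin n) : G.IsNonMetricCycle (c ∘ rot r) := by
  obtain ⟨hcyc, i₀, hlong⟩ := hc
  obtain ⟨k₀, hk₀⟩ := (rot_bijective r).2 i₀
  refine ⟨isCycle_rot hcyc r, k₀, ?_⟩
  unfold IsLongEdge at *
  rw [cycleLen_rot]
  simp only [Function.comp_apply]
  rw [rot_cycSucc, hk₀]
  exact hlong

lemma split_cycle {G : ELGraph V} {n : ℕ} (cc : Fin n → V) (hcyc : G.IsCycle cc)
    (k' : Fin n) (hm2 : 2 ≤ k'.1) (hmn : k'.1 + 2 ≤ n)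
    (hchord : G.Adj (cc ⟨0, by omega⟩) (cc k'))
    (i₀ : Fin n) (hlong : G.IsLongEdge cc i₀) :
    ∃ m < n, ∃ c' : Fin m → V, G.IsNonMetricCycle c' := by
  have hn : 0 < n := by omega
  obtain ⟨m, hm⟩ : ∃ m, k'.1 = m := ⟨k'.1, rfl⟩
  rw [hm] at hm2 hmn
  obtain ⟨q, hq⟩ : ∃ q, n - m = q := ⟨n - m, rfl⟩
  set F : ℕ → ℝ := fun k =>
    if h : k < n then G.label (cc ⟨k, h⟩) (cc (⟨k, h⟩ : Fin n).cycSucc) else 0 with hF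
  have hFval : ∀ (k : ℕ) (h : k < n),
      F k = G.label (cc ⟨k, h⟩) (cc (⟨k, h⟩ : Fin n).cycSucc) := by
    intro k h
    simp only [hF, dif_pos h]
  have hS : G.cycleLen cc = ∑ k ∈ Finset.range n, F k := by
    rw [cycleLen, ← Fin.sum_univ_eq_sum_range]
    apply Finset.sum_congr rfl
    intro k _
    rw [hFval k.1 k.isLt]
  set A1 := ∑ k ∈ Finset.range m, F k with hA1
  set A2 := ∑ k ∈ Finset.Ico m n, F k with hA2
  have hA : G.cycleLen cc = A1 + A2 := by
    rw [hS, Finset.range_eq_Ico, ← Finset.sum_Ico_consecutive F (Nat.zero_le m) (by omega),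
      hA1, hA2, Finset.range_eq_Ico]
  set t := G.label (cc ⟨0, hn⟩) (cc k') with ht
  have he : G.label (cc i₀) (cc i₀.cycSucc) = F i₀.1 := (hFval i₀.1 i₀.isLt).symm
  have hlong' : A1 + A2 - F i₀.1 < F i₀.1 := by
    have := hlong
    rw [IsLongEdge, he, hA] at this
    exact this
  -- first subcycle: vertices 0, 1, ..., m and chord back
  set c1 : Fin (m + 1) → V := fun k => cc ⟨k.1, by have := k.isLt; omega⟩ with hc1def
  have hc1succ : ∀ k : Fin (m + 1), (hk : k.1 < m) →
      c1 k = cc ⟨k.1, by omega⟩ ∧ c1 k.cycSucc = cc ((⟨k.1, by omega⟩ : Fin n).cycSucc) := by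
    intro k hk
    refine ⟨rfl, ?_⟩
    have h1 : k.cycSucc = (⟨k.1 + 1, by omega⟩ : Fin (m + 1)) := by
      simp only [Fin.cycSucc, Fin.ext_iff, Fin.val_mk]
      exact Nat.mod_eq_of_lt (by omega)
    have h2 : ((⟨k.1, by omega⟩ : Fin n)).cycSucc = ⟨k.1 + 1, by omega⟩ := by
      simp only [Fin.cycSucc, Fin.ext_iff, Fin.val_mk]
      exact Nat.mod_eq_of_lt (by omega)
    rw [h1, h2]
  have hc1edge : ∀ k : Fin (m + 1), k.1 < m →
      G.label (c1 k) (c1 k.cycSucc) = F k.1 := by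
    intro k hk
    obtain ⟨e1, e2⟩ := hc1succ k hk
    rw [e1, e2, hFval k.1 (by omega)]
  have hc1last : c1 (Fin.last m) = cc k' ∧ c1 (Fin.last m).cycSucc = cc ⟨0, hn⟩ := by
    constructor
    · exact congrArg cc (Fin.ext (by simp only [Fin.val_mk, Fin.val_last]; omega))
    · rw [cycSucc_last]
      rfl
  have hcyc1 : G.IsCycle c1 := by
    refine ⟨by omega, ?_, ?_⟩
    · intro a b hab
      have h := hcyc.2.1 hab
      simp only [Fin.mk.injEq] at h
      exact Fin.ext h
    · intro k
      by_cases hk : k.1 < m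
      · obtain ⟨e1, e2⟩ := hc1succ k hk
        rw [e1, e2]
        exact hcyc.2.2 _
      · have : k = Fin.last m := Fin.ext (by have := k.isLt; simp [Fin.last]; omega)
        rw [this, hc1last.1, hc1last.2]
        exact G.adj_symm _ _ hchord
  have hlen1 : G.cycleLen c1 = A1 + t := by
    rw [cycleLen, Fin.sum_univ_castSucc]
    have h1 : ∑ i : Fin m, G.label (c1 i.castSucc) (c1 i.castSucc.cycSucc) = A1 := by
      rw [hA1, ← Fin.sum_univ_eq_sum_range]
      apply Finset.sum_congr rfl
      intro i _
      exact hc1edge i.castSucc i.isLt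
    rw [h1, hc1last.1, hc1last.2, ht, G.label_symm]
  -- second subcycle: vertices 0, m, m+1, ..., n-1
  set c2 : Fin (q + 1) → V := fun k =>
    if k.1 = 0 then cc ⟨0, hn⟩ else cc ⟨m + k.1 - 1, by have := k.isLt; omega⟩ with hc2def
  have hc2succ : ∀ k : Fin (q + 1), (hk : 1 ≤ k.1) →
      c2 k = cc ⟨m + k.1 - 1, by have := k.isLt; omega⟩ ∧
      c2 k.cycSucc = cc ((⟨m + k.1 - 1, by have := k.isLt; omega⟩ : Fin n).cycSucc) := by
    intro k hk
    constructor
    · show (if k.1 = 0 then _ else _) = _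
      rw [if_neg (by omega)]
    · by_cases hkq : k.1 < q
      · have h1 : k.cycSucc = (⟨k.1 + 1, by omega⟩ : Fin (q + 1)) := by
          simp only [Fin.cycSucc, Fin.ext_iff, Fin.val_mk]
          exact Nat.mod_eq_of_lt (by omega)
        have h2 : ((⟨m + k.1 - 1, by have := k.isLt; omega⟩ : Fin n)).cycSucc
            = ⟨m + k.1, by omega⟩ := by
          simp only [Fin.cycSucc, Fin.ext_iff, Fin.val_mk]
          rw [show m + k.1 - 1 + 1 = m + k.1 by omega]
          exact Nat.mod_eq_of_lt (by omega)
        rw [h1, h2]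
        simp only [hc2def, Fin.val_mk]
        rw [if_neg (by omega)]
        exact congrArg cc (Fin.ext (by simp only [Fin.val_mk]; omega))
      · have hkq' : k.1 = q := by have := k.isLt; omega
        have h1 : k.cycSucc = (⟨0, by omega⟩ : Fin (q + 1)) := by
          simp only [Fin.cycSucc, Fin.ext_iff, hkq']
          exact Nat.mod_self _
        have h2 : ((⟨m + k.1 - 1, by have := k.isLt; omega⟩ : Fin n)).cycSucc
            = ⟨0, hn⟩ := by
          simp only [Fin.cycSucc, Fin.ext_iff, Fin.val_mk]
          rw [show m + k.1 - 1 + 1 = n by omega]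
          exact Nat.mod_self _
        rw [h1, h2]
        show (if _ = 0 then _ else _) = _
        rw [if_pos rfl]
  have hc20 : c2 ⟨0, by omega⟩ = cc ⟨0, hn⟩ ∧
      c2 ((⟨0, by omega⟩ : Fin (q + 1)).cycSucc) = cc k' := by
    constructor
    · show (if _ = 0 then _ else _) = _
      rw [if_pos rfl]
    · have h1 : ((⟨0, by omega⟩ : Fin (q + 1))).cycSucc = ⟨1, by omega⟩ := by
        simp only [Fin.cycSucc, Fin.ext_iff, Fin.val_mk]
        exact Nat.mod_eq_of_lt (by omega)
      rw [h1]
      simp only [hc2def, Fin.val_mk]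
      rw [if_neg (by omega)]
      congr 1
      exact Fin.ext (by simp only [Fin.val_mk]; omega)
  have hc2edge : ∀ (kv : ℕ) (h1 : 1 ≤ kv) (h2 : kv < q + 1),
      G.label (c2 ⟨kv, h2⟩) (c2 (⟨kv, h2⟩ : Fin (q + 1)).cycSucc) = F (m + kv - 1) := by
    intro kv h1v h2v
    obtain ⟨e1, e2⟩ := hc2succ ⟨kv, h2v⟩ h1v
    rw [e1, e2, hFval _ (by omega)]
  have hcyc2 : G.IsCycle c2 := by
    refine ⟨by omega, ?_, ?_⟩
    · intro a b hab
      by_cases ha : a.1 = 0 <;> by_cases hb : b.1 = 0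
      · exact Fin.ext (by omega)
      · exfalso
        rw [show a = ⟨0, by omega⟩ from Fin.ext ha, hc20.1,
          (hc2succ b (by omega)).1] at hab
        have h := hcyc.2.1 hab
        simp only [Fin.mk.injEq] at h
        omega
      · exfalso
        rw [show b = ⟨0, by omega⟩ from Fin.ext hb, hc20.1,
          (hc2succ a (by omega)).1] at hab
        have h := hcyc.2.1 hab
        simp only [Fin.mk.injEq] at h
        omega
      · rw [(hc2succ a (by omega)).1, (hc2succ b (by omega)).1] at hab
        have h := hcyc.2.1 hab
        simp only [Fin.mk.injEq] at h
        exact Fin.ext (by omega)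
    · intro k
      by_cases hk : k.1 = 0
      · rw [show k = ⟨0, by omega⟩ from Fin.ext hk, hc20.1, hc20.2]
        exact hchord
      · obtain ⟨e1, e2⟩ := hc2succ k (by omega)
        rw [e1, e2]
        exact hcyc.2.2 _
  have hlen2 : G.cycleLen c2 = t + A2 := by
    rw [cycleLen, Fin.sum_univ_succ]
    have h0 : G.label (c2 0) (c2 (0 : Fin (q + 1)).cycSucc) = t := by
      have hz : (0 : Fin (q + 1)) = ⟨0, by omega⟩ := rfl
      rw [hz, hc20.1, hc20.2]
    have hrest : ∑ i : Fin q, G.label (c2 i.succ) (c2 i.succ.cycSucc) = A2 := by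
      rw [hA2, Finset.sum_Ico_eq_sum_range, hq,
        ← Fin.sum_univ_eq_sum_range (fun k => F (m + k)) q]
      apply Finset.sum_congr rfl
      intro i _
      exact hc2edge (i.1 + 1) (by omega) (by have := i.isLt; omega)
    rw [h0, hrest]
  -- case analysis
  by_cases hcase1 : A2 < t
  · refine ⟨q + 1, by omega, c2, hcyc2, ⟨0, by omega⟩, ?_⟩
    unfold IsLongEdge
    rw [hlen2, hc20.1, hc20.2, ← ht]
    linarith
  by_cases hcase2 : A1 < t
  · refine ⟨m + 1, by omega, c1, hcyc1, Fin.last m, ?_⟩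
    unfold IsLongEdge
    rw [hlen1, hc1last.1, hc1last.2, G.label_symm, ← ht]
    linarith
  push_neg at hcase1 hcase2
  by_cases hcase3 : i₀.1 < m
  · refine ⟨m + 1, by omega, c1, hcyc1, ⟨i₀.1, by omega⟩, ?_⟩
    unfold IsLongEdge
    rw [hlen1, hc1edge ⟨i₀.1, by omega⟩ hcase3]
    linarith
  · refine ⟨q + 1, by omega, c2, hcyc2, ⟨i₀.1 - m + 1, by have := i₀.isLt; omega⟩, ?_⟩
    unfold IsLongEdge
    rw [hlen2, hc2edge (i₀.1 - m + 1) (by omega) (by have := i₀.isLt; omega),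
      show m + (i₀.1 - m + 1) - 1 = i₀.1 from by omega]
    linarith

lemma exists_induced_nonmetric (G : ELGraph V) :
    ∀ (n : ℕ) (c : Fin n → V), G.IsNonMetricCycle c →
      ∃ (m : ℕ) (c' : Fin m → V), G.IsInducedCycle c' ∧ G.IsNonMetricCycle c' := by
  intro n
  induction n using Nat.strong_induction_on with
  | _ n ih =>
    intro c hc
    by_cases hind : ∀ i j, G.Adj (c i) (c j) → j = i.cycSucc ∨ i = j.cycSucc
    · exact ⟨n, c, ⟨hc.1, hind⟩, hc⟩
    · push_neg at hind
      obtain ⟨i, j, hadjij, hjne, hine⟩ := hind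
      have hn3 : 3 ≤ n := hc.1.1
      have hn : 0 < n := by omega
      obtain ⟨k', hk'⟩ := (rot_bijective i).2 j
      obtain ⟨hcc_cyc, i₀, hlong⟩ := isNonMetricCycle_rot hc i
      have hr0 : rot i ⟨0, hn⟩ = i := rot_zero i
      have hk'0 : k'.1 ≠ 0 := by
        intro h0
        rw [show k' = ⟨0, hn⟩ from Fin.ext h0, hr0] at hk'
        rw [← hk'] at hadjij
        exact G.adj_irrefl _ hadjij
      have hk'1 : k'.1 ≠ 1 := by
        intro h1
        have hcs : k' = (⟨0, hn⟩ : Fin n).cycSucc := by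
          apply Fin.ext
          simp only [Fin.cycSucc, Fin.val_mk]
          rw [Nat.mod_eq_of_lt (by omega)]
          omega
        apply hjne
        rw [← hk', hcs, rot_cycSucc, hr0]
      have hk'last : k'.1 + 1 ≠ n := by
        intro hl
        apply hine
        have hcs0 : k'.cycSucc = ⟨0, hn⟩ := by
          apply Fin.ext
          simp only [Fin.cycSucc, Fin.val_mk]
          rw [hl]
          exact Nat.mod_self n
        rw [← hk', ← rot_cycSucc, hcs0, hr0]
      have hchord : G.Adj ((c ∘ rot i) ⟨0, hn⟩) ((c ∘ rot i) k') := by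
        simp only [Function.comp_apply, hr0, hk']
        exact hadjij
      have hm2 : 2 ≤ k'.1 := by omega
      have hmn : k'.1 + 2 ≤ n := by have := k'.isLt; omega
      obtain ⟨m', hm'n, c', hc'⟩ := split_cycle (c ∘ rot i) hcc_cyc k' hm2 hmn hchord i₀ hlong
      exact ih m' hm'n c' hc'

end ELGraph

/-- Let `G` be a finite connected `ℝ>0`-edge-labelled graph and `d` its shortest-path
distance. Then every edge of `G` has label equal to the shortest-path distance between
its endpoints (i.e. `G` is a subgraph of its shortest path completion) if and only if
`G` contains no induced non-metric cycle. -/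
theorem subgraph_of_completion_iff_no_induced_nonmetric_cycle {V : Type*} [Fintype V]
    (G : ELGraph V) (hG : G.Connected) (d : V → V → ℝ) (hd : G.IsShortestDist d) :
    (∀ x y, G.Adj x y → G.label x y = d x y) ↔
      ¬ ∃ (n : ℕ) (c : Fin n → V), G.IsInducedCycle c ∧ G.IsNonMetricCycle c := by
  constructor
  · rintro h ⟨n, c, hind, hnm⟩
    exact ELGraph.metric_no_nonmetric hd h hnm
  · intro hno x y hxy
    by_contra hbad
    obtain ⟨n, c, hnm⟩ := ELGraph.nonmetric_of_bad_edge hd hxy hbad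
    obtain ⟨m, c', hind, hnm'⟩ := ELGraph.exists_induced_nonmetric G n c hnm
    exact hno ⟨m, c', hind, hnm'⟩
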